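/- In the DBMS reinforcement learning rule, the disturbance term satisfies |Ṽ_t| ≤ Σ_j o²·n / R̄_j(t)², and since at each step R̄_j(t+1) = R̄_j(t) + ε_t with ε_t ≥ ε > 0 with probability at least p > 0 (conditionally on the past), the sequence {1/R̄_j(t)²} is almost surely summable; hence {Ṽ_t} is almost surely summable. -/

import Mathlib

open Finset MeasureTheory Filter

def RowStochastic {a b : ℕ} (M : Matrix (Fin a) (Fin b) ℝ) : Prop :=
  (∀ i j, 0 ≤ M i j) ∧ ∀ i, ∑ j, M i j = 1

/-- Core probabilistic lemma: if events `A t` are `ℱ (t+1)`-measurable and each has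
conditional probability at least `p` given `ℱ t`, then almost surely the number of
occurrences among the first `t` events grows at least linearly. -/
lemma core_growth {Ω : Type*} {m0 : MeasurableSpace Ω}
    (μ : Measure Ω) [IsProbabilityMeasure μ] (ℱ : Filtration ℕ m0)
    (A : ℕ → Set Ω) (hA : ∀ t, MeasurableSet[ℱ (t + 1)] (A t))
    (p : ℝ) (hp : 0 < p) (hp1 : p ≤ 1)
    (hcond : ∀ t, ∀ᵐ ω ∂μ,
      p ≤ (μ[Set.indicator (A t) (fun _ => (1 : ℝ)) | ℱ t]) ω) :
    ∃ a : ℝ, 0 < a ∧ ∀ᵐ ω ∂μ, ∀ᶠ (t : ℕ) in atTop,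
      a * (t : ℝ) ≤ ∑ s ∈ Finset.range t, Set.indicator (A s) (fun _ => (1 : ℝ)) ω := by
  classical
  set q : ℝ := 1 - p / 4 with hq_def
  have hq0 : 0 < q := by simp only [hq_def]; linarith
  have hq1 : q < 1 := by simp only [hq_def]; linarith
  set f : ℕ → Ω → ℝ := fun t ω =>
    ∏ s ∈ Finset.range t, (if ω ∈ A s then (3 / 4 : ℝ) else 1) with hf_def
  -- pointwise bounds
  have hf0 : ∀ t ω, 0 ≤ f t ω := by
    intro t ω
    apply Finset.prod_nonneg
    intro s _
    split <;> norm_num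
  have hf1 : ∀ t ω, f t ω ≤ 1 := by
    intro t ω
    apply Finset.prod_le_one
    · intro s _; split <;> norm_num
    · intro s _; split <;> norm_num
  -- measurability
  have hmf : ∀ t, StronglyMeasurable[ℱ t] (f t) := by
    intro t
    apply Finset.stronglyMeasurable_fun_prod
    intro s hs
    have hst : s + 1 ≤ t := Finset.mem_range.mp hs
    have hAs : MeasurableSet[ℱ t] (A s) := ℱ.mono hst _ (hA s)
    have : Measurable[ℱ t] fun ω => if ω ∈ A s then (3 / 4 : ℝ) else 1 :=
      Measurable.ite hAs measurable_const measurable_const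
    exact this.stronglyMeasurable
  have hmf0 : ∀ t, StronglyMeasurable (f t) := fun t => (hmf t).mono (ℱ.le t)
  have hint : ∀ t, Integrable (f t) μ := by
    intro t
    refine (integrable_const (1 : ℝ)).mono' (hmf0 t).aestronglyMeasurable ?_
    refine ae_of_all _ fun ω => ?_
    rw [Real.norm_eq_abs, abs_of_nonneg (hf0 t ω)]
    exact hf1 t ω
  have hI : ∀ t, Integrable (Set.indicator (A t) (fun _ => (1 : ℝ))) μ :=
    fun t => (integrable_const (1 : ℝ)).indicator (ℱ.le (t + 1) _ (hA t))
  have hfI : ∀ t, Integrable (fun ω => f t ω *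
      Set.indicator (A t) (fun _ => (1 : ℝ)) ω) μ := by
    intro t
    exact (hI t).bdd_mul (hmf0 t).aestronglyMeasurable
      (c := 1) (ae_of_all _ fun ω => by rw [Real.norm_eq_abs, abs_of_nonneg (hf0 t ω)]; exact hf1 t ω)
  -- key step: conditional expectation bound
  have key : ∀ t, ∫ ω, f (t + 1) ω ∂μ ≤ q * ∫ ω, f t ω ∂μ := by
    intro t
    have hfe : ∀ ω, f (t + 1) ω = f t ω - (1 / 4) *
        (f t ω * Set.indicator (A t) (fun _ => (1 : ℝ)) ω) := by
      intro ω
      simp only [hf_def, Finset.prod_range_succ]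
      by_cases h : ω ∈ A t
      · simp only [h, if_pos, Set.indicator_of_mem h]; ring
      · simp only [h, if_neg, Set.indicator_of_notMem h, not_false_iff]; ring
    have hlow : p * ∫ ω, f t ω ∂μ ≤
        ∫ ω, f t ω * Set.indicator (A t) (fun _ => (1 : ℝ)) ω ∂μ := by
      have h1 : ∫ ω, f t ω * Set.indicator (A t) (fun _ => (1 : ℝ)) ω ∂μ =
          ∫ ω, f t ω * (μ[Set.indicator (A t) (fun _ => (1 : ℝ)) | ℱ t]) ω ∂μ := by
        rw [← integral_condExp (ℱ.le t) (f := fun ω => f t ω *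
          Set.indicator (A t) (fun _ => (1 : ℝ)) ω)]
        exact integral_congr_ae
          (condExp_mul_of_stronglyMeasurable_left (hmf t) (hfI t) (hI t))
      rw [h1, ← integral_const_mul]
      refine integral_mono_ae ((hint t).const_mul p) ?_ ?_
      · exact (integrable_condExp).bdd_mul (hmf0 t).aestronglyMeasurable
          (c := 1) (ae_of_all _ fun ω => by rw [Real.norm_eq_abs, abs_of_nonneg (hf0 t ω)]; exact hf1 t ω)
      · filter_upwards [hcond t] with ω hω
        rw [mul_comm]
        exact mul_le_mul_of_nonneg_left hω (hf0 t ω)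
    have h2 : ∫ ω, f (t + 1) ω ∂μ = ∫ ω, f t ω ∂μ - (1 / 4) *
        ∫ ω, f t ω * Set.indicator (A t) (fun _ => (1 : ℝ)) ω ∂μ := by
      rw [← integral_const_mul, ← integral_sub (hint t) ((hfI t).const_mul _)]
      exact integral_congr_ae (ae_of_all _ hfe)
    rw [h2]
    simp only [hq_def]
    nlinarith [hlow]
  -- by induction
  have hbound : ∀ t, ∫ ω, f t ω ∂μ ≤ q ^ t := by
    intro t
    induction t with
    | zero =>
      simp only [hf_def, Finset.range_zero, Finset.prod_empty, pow_zero]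
      simp [integral_const]
    | succ t ih =>
      calc ∫ ω, f (t + 1) ω ∂μ ≤ q * ∫ ω, f t ω ∂μ := key t
        _ ≤ q * q ^ t := mul_le_mul_of_nonneg_left ih hq0.le
        _ = q ^ (t + 1) := (pow_succ' q t).symm
  -- Markov inequality and Borel-Cantelli
  set r : ℝ := Real.sqrt q with hr_def
  have hr0 : 0 < r := Real.sqrt_pos.mpr hq0
  have hrq : r * r = q := Real.mul_self_sqrt hq0.le
  have hr1 : r < 1 := by nlinarith
  have hμB : ∀ t, μ {ω | r ^ t ≤ f t ω} ≤ ENNReal.ofReal (r ^ t) := by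
    intro t
    have hm := mul_meas_ge_le_integral_of_nonneg (ae_of_all _ (hf0 t)) (hint t) (r ^ t)
    have hrt : (0 : ℝ) < r ^ t := pow_pos hr0 t
    have hqt : q ^ t = r ^ t * r ^ t := by rw [← hrq, mul_pow]
    have h3 : (μ {ω | r ^ t ≤ f t ω}).toReal ≤ r ^ t := by
      have := le_trans hm (hbound t)
      rw [hqt] at this
      exact le_of_mul_le_mul_left (by rw [← measureReal_def]; linarith [this]) hrt
    calc μ {ω | r ^ t ≤ f t ω}
        = ENNReal.ofReal ((μ {ω | r ^ t ≤ f t ω}).toReal) :=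
          (ENNReal.ofReal_toReal (measure_ne_top μ _)).symm
      _ ≤ ENNReal.ofReal (r ^ t) := ENNReal.ofReal_le_ofReal h3
  have hsum : (∑' t, μ {ω | r ^ t ≤ f t ω}) ≠ ⊤ := by
    have hgeo : Summable fun t : ℕ => r ^ t := summable_geometric_of_lt_one hr0.le hr1
    refine ne_top_of_le_ne_top ?_ (ENNReal.tsum_le_tsum hμB)
    rw [← ENNReal.ofReal_tsum_of_nonneg (fun t => (pow_pos hr0 t).le) hgeo]
    exact ENNReal.ofReal_ne_top
  -- conclusion
  refine ⟨Real.log r / Real.log (3 / 4), ?_, ?_⟩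
  · have h34 : Real.log (3 / 4 : ℝ) < 0 := Real.log_neg (by norm_num) (by norm_num)
    have hlr : Real.log r < 0 := Real.log_neg hr0 hr1
    exact div_pos_iff.mpr (Or.inr ⟨hlr, h34⟩)
  · filter_upwards [ae_eventually_notMem hsum] with ω hω
    filter_upwards [hω] with t ht
    have hlt : f t ω < r ^ t := lt_of_not_ge ht
    set N : ℕ := ((Finset.range t).filter (fun s => ω ∈ A s)).card with hN_def
    have hfN : f t ω = (3 / 4 : ℝ) ^ N := by
      simp only [hf_def, hN_def]
      rw [Finset.prod_ite, Finset.prod_const, Finset.prod_const, one_pow, mul_one]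
    rw [hfN] at hlt
    have hsum_ind : ∑ s ∈ Finset.range t, Set.indicator (A s) (fun _ => (1 : ℝ)) ω
        = (N : ℝ) := by
      simp only [hN_def, Finset.card_filter]
      push_cast
      refine Finset.sum_congr rfl fun s _ => ?_
      by_cases h : ω ∈ A s
      · simp [h]
      · simp [h]
    rw [hsum_ind]
    have h34 : Real.log (3 / 4 : ℝ) < 0 := Real.log_neg (by norm_num) (by norm_num)
    have hlog := Real.log_lt_log (pow_pos (by norm_num : (0:ℝ) < 3/4) N) hlt
    rw [Real.log_pow, Real.log_pow] at hlog
    have : Real.log r / Real.log (3 / 4) * t < N := by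
      rw [div_mul_eq_mul_div, div_lt_iff_of_neg h34]
      calc (N : ℝ) * Real.log (3 / 4) < t * Real.log r := hlog
        _ = Real.log r * t := mul_comm _ _
    exact this.le

/-- The disturbance term `Ṽ t` in the DBMS reinforcement learning drift is
bounded by `∑ j, o² n / R̄ j t ²`, and since the accumulated rewards `R̄ j`
grow by at least `ε0 > 0` with conditional probability at least `p > 0` at
every step, `1 / R̄ j t ²` is almost surely summable; hence `Ṽ` is almost
surely summable. -/
theorem disturbance_summable {n o : ℕ} {Ω : Type*} {m0 : MeasurableSpace Ω}
    (μ : Measure Ω) [IsProbabilityMeasure μ] (ℱ : Filtration ℕ m0)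
    (Rbar : ℕ → Ω → Fin n → ℝ) (ε : ℕ → Ω → Fin n → ℝ)
    (ε0 p : ℝ) (hε0 : 0 < ε0) (hp : 0 < p)
    (hR0 : ∀ ω j, 0 < Rbar 0 ω j)
    (hεnonneg : ∀ t ω j, 0 ≤ ε t ω j)
    (hrec : ∀ t ω j, Rbar (t + 1) ω j = Rbar t ω j + ε t ω j)
    (hadapted : ∀ j, Adapted ℱ fun t ω => Rbar t ω j)
    (hcond : ∀ t j, ∀ᵐ ω ∂μ,
      p ≤ (μ[Set.indicator {ω' | ε0 ≤ ε t ω' j} (fun _ => (1 : ℝ)) | ℱ t]) ω)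
    (D : ℕ → Ω → Matrix (Fin n) (Fin o) ℝ)
    (hD : ∀ t ω, RowStochastic (D t ω))
    (y z : ℕ → Ω → Fin n → Fin o → ℝ)
    (hy : ∀ t ω j l, y t ω j l ∈ Set.Icc (0 : ℝ) 1)
    (hz : ∀ t ω j l, z t ω j l ∈ Set.Icc (0 : ℝ) (1 / (Rbar t ω j) ^ 2))
    (V : ℕ → Ω → ℝ)
    (hV : ∀ t ω, V t ω = ∑ j,
      ((∑ l, D t ω j l * y t ω j l) * (∑ l', D t ω j l' * z t ω j l') -
        ∑ l, D t ω j l * y t ω j l * z t ω j l)) :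
    (∀ t ω, |V t ω| ≤ ∑ j : Fin n, ((o : ℝ) ^ 2 * n) / (Rbar t ω j) ^ 2) ∧
    (∀ᵐ ω ∂μ, (∀ j, Summable fun t => 1 / (Rbar t ω j) ^ 2) ∧
      Summable fun t => V t ω) := by
  classical
  -- positivity of Rbar
  have hRpos : ∀ t ω j, 0 < Rbar t ω j := by
    intro t
    induction t with
    | zero => exact hR0
    | succ t ih =>
      intro ω j
      rw [hrec]
      have := hεnonneg t ω j
      linarith [ih ω j]
  -- Part 1: the deterministic bound
  have part1 : ∀ t ω, |V t ω| ≤ ∑ j : Fin n, ((o : ℝ) ^ 2 * n) / (Rbar t ω j) ^ 2 := by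
    intro t ω
    rw [hV]
    refine le_trans (Finset.abs_sum_le_sum_abs _ _) (Finset.sum_le_sum fun j _ => ?_)
    have hn1 : (1 : ℝ) ≤ n := by
      have := j.pos
      exact_mod_cast this
    have ho1 : (1 : ℝ) ≤ o := by
      have hsum := (hD t ω).2 j
      rcases Nat.eq_zero_or_pos o with ho | ho
      · subst ho
        simp at hsum
      · exact_mod_cast ho
    have hR2 : (0 : ℝ) < (Rbar t ω j) ^ 2 := pow_pos (hRpos t ω j) 2
    set R2 := (Rbar t ω j) ^ 2
    have hDnn := (hD t ω).1
    have hDsum := (hD t ω).2 j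
    -- bounds on the three sums
    have hA0 : (0 : ℝ) ≤ ∑ l, D t ω j l * y t ω j l :=
      Finset.sum_nonneg fun l _ => mul_nonneg (hDnn j l) (hy t ω j l).1
    have hA1 : ∑ l, D t ω j l * y t ω j l ≤ 1 := by
      have h1 : ∑ l, D t ω j l * y t ω j l ≤ ∑ l, D t ω j l :=
        Finset.sum_le_sum fun l _ => mul_le_of_le_one_right (hDnn j l) (hy t ω j l).2
      rw [hDsum] at h1
      exact h1
    have hB0 : (0 : ℝ) ≤ ∑ l', D t ω j l' * z t ω j l' :=
      Finset.sum_nonneg fun l _ => mul_nonneg (hDnn j l) (hz t ω j l).1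
    have hB1 : ∑ l', D t ω j l' * z t ω j l' ≤ 1 / R2 := by
      have h1 : ∑ l', D t ω j l' * z t ω j l' ≤ ∑ l', D t ω j l' * (1 / R2) :=
        Finset.sum_le_sum fun l _ =>
          mul_le_mul_of_nonneg_left (hz t ω j l).2 (hDnn j l)
      rwa [← Finset.sum_mul, hDsum, one_mul] at h1
    have hC0 : (0 : ℝ) ≤ ∑ l, D t ω j l * y t ω j l * z t ω j l :=
      Finset.sum_nonneg fun l _ =>
        mul_nonneg (mul_nonneg (hDnn j l) (hy t ω j l).1) (hz t ω j l).1
    have hC1 : ∑ l, D t ω j l * y t ω j l * z t ω j l ≤ 1 / R2 := by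
      have h0 : ∑ l, D t ω j l * y t ω j l * z t ω j l
          ≤ ∑ l, D t ω j l * (1 / R2) := Finset.sum_le_sum fun l _ => by
        have h1 := (hy t ω j l).1
        have h2 := (hy t ω j l).2
        have h3 := (hz t ω j l).1
        have h4 := (hz t ω j l).2
        have h5 := hDnn j l
        have h6 : D t ω j l * y t ω j l * z t ω j l ≤ D t ω j l * z t ω j l := by
          nlinarith [mul_nonneg (mul_nonneg h5 h3) (sub_nonneg.mpr h2)]
        have h7 : D t ω j l * z t ω j l ≤ D t ω j l * (1 / Rbar t ω j ^ 2) :=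
          mul_le_mul_of_nonneg_left h4 h5
        show D t ω j l * y t ω j l * z t ω j l ≤ D t ω j l * (1 / Rbar t ω j ^ 2)
        linarith
      rwa [← Finset.sum_mul, hDsum, one_mul] at h0
    have habs : |(∑ l, D t ω j l * y t ω j l) * (∑ l', D t ω j l' * z t ω j l') -
        ∑ l, D t ω j l * y t ω j l * z t ω j l| ≤ 1 / R2 := by
      have hu : (0 : ℝ) ≤ 1 / R2 := le_of_lt (by positivity)
      rw [abs_le]
      constructor
      · nlinarith
      · nlinarith
    refine habs.trans ?_
    have hK : (1 : ℝ) ≤ (o : ℝ) ^ 2 * n := by nlinarith [hn1, ho1]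
    rw [div_le_div_iff₀ hR2 hR2]
    nlinarith [mul_le_mul_of_nonneg_right hK hR2.le]
  refine ⟨part1, ?_⟩
  -- Part 2: probabilistic summability
  set p' : ℝ := min p 1 with hp'_def
  have hp'0 : 0 < p' := lt_min hp one_pos
  have hp'1 : p' ≤ 1 := min_le_right _ _
  have hεmeas : ∀ (s : ℕ) (j : Fin n),
      StronglyMeasurable[ℱ (s + 1)] (fun ω => ε s ω j) := by
    intro s j
    have h1 := hadapted j (s + 1)
    have h2 := (hadapted j s).mono (ℱ.mono (Nat.le_succ s)) le_rfl
    have he : (fun ω => ε s ω j) = fun ω => Rbar (s + 1) ω j - Rbar s ω j := by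
      funext ω
      rw [hrec]
      ring
    rw [he]
    exact (h1.sub h2).stronglyMeasurable
  have hAmeas : ∀ (s : ℕ) (j : Fin n),
      MeasurableSet[ℱ (s + 1)] {ω | ε0 ≤ ε s ω j} := by
    intro s j
    have : {ω | ε0 ≤ ε s ω j} = (fun ω => ε s ω j) ⁻¹' Set.Ici ε0 := rfl
    rw [this]
    exact (hεmeas s j).measurable measurableSet_Ici
  have hcore : ∀ j : Fin n, ∃ a : ℝ, 0 < a ∧ ∀ᵐ ω ∂μ, ∀ᶠ (t : ℕ) in atTop,
      a * (t : ℝ) ≤ ∑ s ∈ Finset.range t,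
        Set.indicator {ω' | ε0 ≤ ε s ω' j} (fun _ => (1 : ℝ)) ω := by
    intro j
    refine core_growth μ ℱ (fun s => {ω' | ε0 ≤ ε s ω' j})
      (fun s => hAmeas s j) p' hp'0 hp'1 fun t => ?_
    filter_upwards [hcond t j] with ω hω
    exact le_trans (min_le_left _ _) hω
  choose a ha hae using hcore
  filter_upwards [ae_all_iff.mpr hae] with ω hω
  -- accumulation formula
  have hRsum : ∀ (t : ℕ) (j : Fin n),
      Rbar t ω j = Rbar 0 ω j + ∑ s ∈ Finset.range t, ε s ω j := by
    intro t j
    induction t with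
    | zero => simp
    | succ t ih => rw [hrec, Finset.sum_range_succ, ih]; ring
  have hsummable : ∀ j, Summable fun t => 1 / (Rbar t ω j) ^ 2 := by
    intro j
    have hgrow : ∀ᶠ t in atTop, ε0 * (a j * t) ≤ Rbar t ω j := by
      filter_upwards [hω j] with t ht
      have hstep : ∑ s ∈ Finset.range t, (if ε0 ≤ ε s ω j then ε0 else 0)
          ≤ ∑ s ∈ Finset.range t, ε s ω j := by
        refine Finset.sum_le_sum fun s _ => ?_
        split
        · assumption
        · exact hεnonneg s ω j
      have hite : ∑ s ∈ Finset.range t, (if ε0 ≤ ε s ω j then ε0 else 0)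
          = ε0 * ∑ s ∈ Finset.range t,
            Set.indicator {ω' | ε0 ≤ ε s ω' j} (fun _ => (1 : ℝ)) ω := by
        rw [Finset.mul_sum]
        refine Finset.sum_congr rfl fun s _ => ?_
        by_cases h : ε0 ≤ ε s ω j
        · simp [h, Set.indicator_of_mem (show ω ∈ {ω' | ε0 ≤ ε s ω' j} from h)]
        · simp [h, Set.indicator_of_notMem (show ω ∉ {ω' | ε0 ≤ ε s ω' j} from h)]
      have hN : ε0 * (a j * t) ≤ ε0 * ∑ s ∈ Finset.range t,
          Set.indicator {ω' | ε0 ≤ ε s ω' j} (fun _ => (1 : ℝ)) ω :=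
        mul_le_mul_of_nonneg_left ht hε0.le
      calc ε0 * (a j * t) ≤ _ := hN
        _ = ∑ s ∈ Finset.range t, (if ε0 ≤ ε s ω j then ε0 else 0) := hite.symm
        _ ≤ ∑ s ∈ Finset.range t, ε s ω j := hstep
        _ ≤ Rbar t ω j := by rw [hRsum t j]; linarith [hR0 ω j]
    have hg : Summable (fun t : ℕ => 1 / (t : ℝ) ^ 2) :=
      Real.summable_one_div_nat_pow.mpr one_lt_two
    refine summable_of_isBigO_nat hg ?_
    rw [Asymptotics.isBigO_iff]
    refine ⟨(1 / (ε0 * a j)) ^ 2, ?_⟩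
    filter_upwards [hgrow, eventually_ge_atTop 1] with t hgt ht1
    have ht0 : (0 : ℝ) < (t : ℝ) := by exact_mod_cast Nat.lt_of_lt_of_le Nat.zero_lt_one ht1
    have hc : (0 : ℝ) < ε0 * a j * t := mul_pos (mul_pos hε0 (ha j)) ht0
    have hcR : ε0 * a j * t ≤ Rbar t ω j := by rw [mul_assoc]; exact hgt
    have hR : (0 : ℝ) < Rbar t ω j := hRpos t ω j
    rw [Real.norm_eq_abs, Real.norm_eq_abs, abs_of_nonneg (by positivity),
      abs_of_nonneg (by positivity)]
    have h2 : (ε0 * a j * t) ^ 2 ≤ Rbar t ω j ^ 2 := by nlinarith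
    have h3 : (0 : ℝ) < (ε0 * a j * t) ^ 2 := by positivity
    have h4 : (1 : ℝ) / Rbar t ω j ^ 2 ≤ 1 / (ε0 * a j * t) ^ 2 :=
      one_div_le_one_div_of_le h3 h2
    have h5 : 1 / (ε0 * a j * t) ^ 2 = (1 / (ε0 * a j)) ^ 2 * (1 / (t : ℝ) ^ 2) := by
      have htne : ((t : ℝ)) ≠ 0 := ne_of_gt ht0
      have hane : ε0 * a j ≠ 0 := ne_of_gt (mul_pos hε0 (ha j))
      field_simp
    rw [← h5]
    exact h4
  refine ⟨hsummable, ?_⟩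
  -- summability of V
  have hgsum : Summable (fun t => ∑ j : Fin n,
      ((o : ℝ) ^ 2 * n) / (Rbar t ω j) ^ 2) := by
    apply summable_sum
    intro j _
    have : (fun t => ((o : ℝ) ^ 2 * n) / (Rbar t ω j) ^ 2)
        = fun t => ((o : ℝ) ^ 2 * n) * (1 / (Rbar t ω j) ^ 2) := by
      funext t
      rw [mul_one_div]
    rw [this]
    exact (hsummable j).mul_left _
  have habs : Summable fun t => |V t ω| :=
    hgsum.of_nonneg_of_le (fun t => abs_nonneg _) (fun t => part1 t ω)
  exact habs.of_abs
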